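/- Let (X, {R_0,...,R_k}) be a symmetric association scheme with v = |X|, adjacency matrices A_i, and common eigenspaces V_0 = span of the all-ones vector, V_1, ..., V_k, with eigenvalues A_i E_j = P_{ji} E_j where E_j is the orthogonal projection onto V_j. Let χ be the characteristic vector of an independent set of size y in the graph (X, R_i). Assume P_{1i} is the smallest eigenvalue of A_i and P^- is the second smallest eigenvalue, and let E_r be the orthogonal projection onto the sum of all eigenspaces other than V_0 and the eigenspace of P_{1i}. Then (P^- - P_{1i}) · χ^T E_r χ ≤ y · (−P_{1i} − (P_{0i} − P_{1i}) · y / v). -/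

import Mathlib

open Matrix


open Matrix in
private lemma hoffman_dot_sum {ι : Type*} {X : Type} [Fintype X] (s : Finset ι)
    (M : ι → Matrix X X ℝ) (x : X → ℝ) :
    x ⬝ᵥ (∑ j ∈ s, M j) *ᵥ x = ∑ j ∈ s, x ⬝ᵥ (M j) *ᵥ x := by
  classical
  induction s using Finset.induction_on with
  | empty => simp
  | insert _ _ h ih =>
      rw [Finset.sum_insert h, Finset.sum_insert h, Matrix.add_mulVec,
        dotProduct_add, ih]

/-- Stability version of Hoffman's bound (Lemma 2.2): for an independent set `S` of the
graph `(X, R_i)` of a symmetric association scheme, with `P 1` the smallest eigenvalue of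
the adjacency matrix `A` (of relation `R_i`), `Pm` the second smallest eigenvalue, and `Er`
the projection onto the eigenspaces orthogonal to the all-ones vector and to the eigenspace
of `P 1`, we have
`(Pm - P 1) · χᵀ Er χ ≤ |S| · (-P 1 - (P 0 - P 1)·|S|/v)`. -/
theorem hoffman_stability {X : Type} [Fintype X] [DecidableEq X] (k : ℕ)
    (A : Matrix X X ℝ) (hA : A.IsSymm)
    (P : Fin (k + 1) → ℝ) (E : Fin (k + 1) → Matrix X X ℝ)
    (hEsymm : ∀ j, (E j).IsSymm)
    (hEidem : ∀ j, E j * E j = E j)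
    (hEorth : ∀ i j, i ≠ j → E i * E j = 0)
    (hEsum : ∑ j, E j = 1)
    (hE0 : E 0 = (Fintype.card X : ℝ)⁻¹ • Matrix.of (fun _ _ => (1 : ℝ)))
    (heig : ∀ j, A * E j = P j • E j)
    (hmin : ∀ j, j ≠ 0 → P 1 ≤ P j)
    (Pm : ℝ)
    (hPm : P 1 ≤ Pm)
    (hsecond : ∀ j, j ≠ 0 → P j ≠ P 1 → Pm ≤ P j)
    (Er : Matrix X X ℝ)
    (hEr : Er = ∑ j ∈ Finset.univ.filter (fun j => j ≠ 0 ∧ P j ≠ P 1), E j)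
    (S : Finset X)
    (hind : ∀ x ∈ S, ∀ y ∈ S, A x y = 0)
    (χ : X → ℝ) (hχ : χ = fun x => if x ∈ S then 1 else 0) :
    (Pm - P 1) * (χ ⬝ᵥ Er.mulVec χ) ≤
      (S.card : ℝ) * (-(P 1) - (P 0 - P 1) * (S.card : ℝ) / (Fintype.card X : ℝ)) := by
  set v : ℝ := (Fintype.card X : ℝ) with hv
  set y : ℝ := (S.card : ℝ) with hy
  set a : Fin (k + 1) → ℝ := fun j => χ ⬝ᵥ (E j).mulVec χ with ha
  -- sum of χ
  have hχsum : ∑ x, χ x = y := by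
    simp [hχ, hy]
  have hχχ : χ ⬝ᵥ χ = y := by
    simp [hχ, dotProduct, ite_and, hy]
  -- each a j is nonnegative
  have anonneg : ∀ j, 0 ≤ a j := by
    intro j
    have h1 : a j = (E j).mulVec χ ⬝ᵥ (E j).mulVec χ := by
      have : E j * E j = (E j)ᵀ * E j := by rw [hEsymm j]
      calc a j = χ ⬝ᵥ (E j * E j).mulVec χ := by rw [hEidem]
        _ = χ ⬝ᵥ (E j)ᵀ.mulVec ((E j).mulVec χ) := by
            rw [this, ← Matrix.mulVec_mulVec]
        _ = (E j).mulVec χ ⬝ᵥ (E j).mulVec χ := by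
            rw [Matrix.dotProduct_mulVec, Matrix.vecMul_transpose]
    rw [h1]
    exact Finset.sum_nonneg fun i _ => mul_self_nonneg _
  -- sum of a j
  have hsuma : ∑ j, a j = y := by
    rw [ha, ← hoffman_dot_sum, hEsum, Matrix.one_mulVec, hχχ]
  -- a 0
  have ha0 : a 0 = y * y / v := by
    have h1 : a 0 = ∑ x, χ x * ((∑ z, χ z) * v⁻¹) := by
      simp only [ha, hE0, Matrix.mulVec, dotProduct, Matrix.smul_apply, Matrix.of_apply,
        smul_eq_mul, one_mul]
      refine Finset.sum_congr rfl fun x _ => ?_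
      congr 1
      rw [Finset.sum_mul]
      exact Finset.sum_congr rfl fun z _ => by ring
    rw [h1, hχsum, ← Finset.sum_mul, hχsum]
    ring
  -- χᵀ A χ = 0
  have hAχ : χ ⬝ᵥ A.mulVec χ = 0 := by
    have h1 : χ ⬝ᵥ A.mulVec χ = ∑ x, ∑ z, χ x * (A x z * χ z) := by
      simp [dotProduct, Matrix.mulVec, Finset.mul_sum]
    rw [h1]
    apply Finset.sum_eq_zero
    intro x _
    apply Finset.sum_eq_zero
    intro z _
    rcases Classical.em (x ∈ S) with hx | hx
    · rcases Classical.em (z ∈ S) with hz | hz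
      · rw [hind x hx z hz]; ring
      · simp [hχ, hz]
    · simp [hχ, hx]
  -- spectral decomposition of A
  have hAdec : A = ∑ j, P j • E j := by
    calc A = A * ∑ j, E j := by rw [hEsum, mul_one]
      _ = ∑ j, A * E j := by rw [Finset.mul_sum]
      _ = ∑ j, P j • E j := by simp [heig]
  have hPa : ∑ j, P j * a j = 0 := by
    have h2 : χ ⬝ᵥ A.mulVec χ = ∑ j, P j * a j := by
      rw [hAdec, hoffman_dot_sum]
      refine Finset.sum_congr rfl fun j _ => ?_
      rw [Matrix.smul_mulVec, dotProduct_smul, smul_eq_mul, ha]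
    rw [← h2, hAχ]
  -- χᵀ Er χ
  set T : Finset (Fin (k + 1)) := Finset.univ.filter (fun j => j ≠ 0 ∧ P j ≠ P 1) with hT
  have hErχ : χ ⬝ᵥ Er.mulVec χ = ∑ j ∈ T, a j := by
    rw [hEr, hoffman_dot_sum]
  -- key identity
  have key : ∑ j, (P j - P 1) * a j = -(P 1) * y := by
    have : ∑ j, (P j - P 1) * a j = ∑ j, P j * a j - P 1 * ∑ j, a j := by
      rw [Finset.mul_sum, ← Finset.sum_sub_distrib]
      exact Finset.sum_congr rfl fun j _ => by ring
    rw [this, hPa, hsuma]; ring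
  have hsplit : ∑ j, (P j - P 1) * a j
      = (P 0 - P 1) * a 0 + ∑ j ∈ Finset.univ.erase (0 : Fin (k + 1)), (P j - P 1) * a j := by
    exact (Finset.add_sum_erase _ _ (Finset.mem_univ (0 : Fin (k + 1)))).symm
  -- lower bound the erased sum by the T sum
  have hTsub : T ⊆ Finset.univ.erase 0 := by
    intro j hj
    rw [hT, Finset.mem_filter] at hj
    exact Finset.mem_erase.mpr ⟨hj.2.1, Finset.mem_univ j⟩
  have hb1 : ∑ j ∈ T, (P j - P 1) * a j ≤ ∑ j ∈ Finset.univ.erase (0 : Fin (k + 1)), (P j - P 1) * a j := by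
    apply Finset.sum_le_sum_of_subset_of_nonneg hTsub
    intro j hj _
    have hj0 : j ≠ 0 := (Finset.mem_erase.mp hj).1
    exact mul_nonneg (sub_nonneg.mpr (hmin j hj0)) (anonneg j)
  have hb2 : (Pm - P 1) * ∑ j ∈ T, a j ≤ ∑ j ∈ T, (P j - P 1) * a j := by
    rw [Finset.mul_sum]
    apply Finset.sum_le_sum
    intro j hj
    rw [hT, Finset.mem_filter] at hj
    exact mul_le_mul_of_nonneg_right (sub_le_sub_right (hsecond j hj.2.1 hj.2.2) _) (anonneg j)
  have hfinal : (Pm - P 1) * ∑ j ∈ T, a j ≤ -(P 1) * y - (P 0 - P 1) * (y * y / v) := by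
    have := hb2.trans hb1
    rw [← ha0]
    linarith [hsplit, key]
  rw [hErχ]
  calc (Pm - P 1) * ∑ j ∈ T, a j ≤ -(P 1) * y - (P 0 - P 1) * (y * y / v) := hfinal
    _ = y * (-(P 1) - (P 0 - P 1) * y / v) := by ring
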